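/- (Surjectivity Theorem for pairs.) Let F_q be any finite field and let (s₀, u₀, t₀) ∈ F_q³ be an arbitrary triple. Then there exist matrices x, y ∈ SL(2, F_q) such that tr(x) = s₀, tr(xy) = u₀ and tr(y) = t₀. In other words, the trace projection π : SL(2,F_q)² → F_q³, π(x,y) = (tr x, tr(xy), tr y), is surjective for every q. -/

import Mathlib

open Matrix

/-- Key existence lemma on matrix entries. -/
lemma key_entries (F : Type*) [Field F] [Fintype F] (s u t : F) :
    ∃ a b c d e f g h : F,
      a * d - b * c = 1 ∧ e * h - f * g = 1 ∧ a + d = s ∧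
      (a * e + b * g) + (c * f + d * h) = u ∧ e + h = t := by
  by_cases h2 : ringChar F = 2
  · -- characteristic 2
    haveI : CharP F 2 := h2 ▸ ringChar.charP F
    have two0 : (2 : F) = 0 := by exact_mod_cast CharP.cast_eq_zero F 2
    rcases eq_or_ne s 0 with hs | hs
    · rcases eq_or_ne u t with hu | hu
      · -- s = 0, u = t
        refine ⟨1, 0, 0, 1, 0, -1, 1, t, by ring, by ring, ?_, ?_, by ring⟩
        · linear_combination two0 - hs
        · linear_combination -hu
      · -- s = 0, u ≠ t
        have hut : u + t ≠ 0 := by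
          intro H
          exact hu (by linear_combination H - t * two0)
        have hinv : (u + t)⁻¹ * (u + t) = 1 := inv_mul_cancel₀ hut
        refine ⟨1, 1, 0, 1, 0, (u + t)⁻¹, u + t, t, by ring, ?_, ?_, ?_, by ring⟩
        · linear_combination (-1 : F) * hinv - two0
        · linear_combination two0 - hs
        · linear_combination t * two0
    · -- s ≠ 0
      set w : F := (t + u) / s with hw
      have hsw : s * w = t + u := by
        rw [hw]; field_simp
      obtain ⟨r, hr⟩ := FiniteField.isSquare_of_char_two h2 ((1 + u * w + w * w) / s)
      have hr2 : s * (r * r) = 1 + u * w + w * w := by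
        rw [← hr]; field_simp
      refine ⟨0, 1, 1, s, t + r, u + (r + w) + s * r, r + w, r, ?_, ?_, by ring, ?_, ?_⟩
      · linear_combination (-1 : F) * two0
      · linear_combination (-1 : F) * hr2 - r * hsw +
          (-(u * r + u * w + w * w + 1 + r * w)) * two0
      · linear_combination (r + w + s * r) * two0
      · linear_combination r * two0
  · -- odd characteristic
    have hcard : Fintype.card F % 2 = 1 := FiniteField.odd_card_of_char_ne_two h2
    have two0 : (2 : F) ≠ 0 := Ring.two_ne_zero h2
    by_cases hkL : 4 - t ^ 2 = 0 ∧ u * t - 2 * s = 0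
    · -- degenerate case : t² = 4 and 2s = ut
      obtain ⟨hk, hL⟩ := hkL
      have ht0 : t ≠ 0 := by
        intro H
        apply two0
        have h4 : (4 : F) = 0 := by linear_combination hk + t * H
        have : (2 : F) * 2 = 0 := by linear_combination h4
        rcases mul_eq_zero.mp this with h | h <;> exact h
      refine ⟨0, -1, 1, s, 2 * t⁻¹, 0, 0, 2 * t⁻¹, by ring, ?_, by ring, ?_, ?_⟩
      · have h1 : t⁻¹ * t = 1 := inv_mul_cancel₀ ht0
        linear_combination (t⁻¹ * t⁻¹) * hk + (t⁻¹ * t + 1) * h1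
      · have h1 : t⁻¹ * t = 1 := inv_mul_cancel₀ ht0
        linear_combination (-t⁻¹) * hL + u * h1
      · have h1 : t⁻¹ * t = 1 := inv_mul_cancel₀ ht0
        linear_combination t⁻¹ * hk + t * h1
    · -- main case: solve the separated conic  (a² + u a + 1) + ((4-t²) b² + (ut-2s) b) = 0
      have hab : ∃ a b : F,
          (a ^ 2 + u * a + 1) + ((4 - t ^ 2) * b ^ 2 + (u * t - 2 * s) * b) = 0 := by
        by_cases hk : 4 - t ^ 2 = 0
        · -- then L ≠ 0, solve linearly
          have hL : u * t - 2 * s ≠ 0 := fun hL => hkL ⟨hk, hL⟩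
          refine ⟨0, -(u * t - 2 * s)⁻¹, ?_⟩
          have h1 : (u * t - 2 * s) * (u * t - 2 * s)⁻¹ = 1 := mul_inv_cancel₀ hL
          linear_combination ((u * t - 2 * s)⁻¹) ^ 2 * hk - h1
        · -- nondegenerate: use the quadratic-sum root lemma
          have hf : Polynomial.degree
              (Polynomial.C (1 : F) * Polynomial.X ^ 2 + Polynomial.C u * Polynomial.X +
                Polynomial.C 1) = 2 := Polynomial.degree_quadratic one_ne_zero
          have hg : Polynomial.degree
              (Polynomial.C (4 - t ^ 2) * Polynomial.X ^ 2 +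
                Polynomial.C (u * t - 2 * s) * Polynomial.X + Polynomial.C 0) = 2 :=
            Polynomial.degree_quadratic hk
          obtain ⟨a, b, hab⟩ := FiniteField.exists_root_sum_quadratic hf hg hcard
          refine ⟨a, b, ?_⟩
          simp only [Polynomial.eval_add, Polynomial.eval_mul, Polynomial.eval_pow,
            Polynomial.eval_C, Polynomial.eval_X] at hab
          linear_combination hab
      obtain ⟨a, b, hab⟩ := hab
      -- build the matrices: x = ![[s-d, c+u-dt],[c,d]] with c = a + t b, d = 2 b ; y companion
      refine ⟨s - 2 * b, (a + t * b) + u - (2 * b) * t, a + t * b, 2 * b,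
        0, -1, 1, t, ?_, by ring, by ring, by ring, by ring⟩
      linear_combination (-1 : F) * hab

/-- Surjectivity Theorem for pairs: over any finite field `F_q`, the trace projection
`π : SL(2,F_q)² → F_q³`, `π(x,y) = (tr x, tr(xy), tr y)`, is surjective. -/
theorem stmt2 (F : Type*) [Field F] [Fintype F] (s₀ u₀ t₀ : F) :
    ∃ x y : Matrix.SpecialLinearGroup (Fin 2) F,
      Matrix.trace (x : Matrix (Fin 2) (Fin 2) F) = s₀ ∧
      Matrix.trace ((x * y : Matrix.SpecialLinearGroup (Fin 2) F) : Matrix (Fin 2) (Fin 2) F) = u₀ ∧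
      Matrix.trace (y : Matrix (Fin 2) (Fin 2) F) = t₀ := by
  obtain ⟨a, b, c, d, e, f, g, h, hx, hy, hs, hu, ht⟩ := key_entries F s₀ u₀ t₀
  refine ⟨⟨!![a, b; c, d], by rw [Matrix.det_fin_two_of]; exact hx⟩,
          ⟨!![e, f; g, h], by rw [Matrix.det_fin_two_of]; exact hy⟩, ?_, ?_, ?_⟩
  · simpa [Matrix.trace_fin_two_of] using hs
  · change Matrix.trace (!![a, b; c, d] * !![e, f; g, h]) = u₀
    simpa [Matrix.mul_fin_two, Matrix.trace_fin_two_of] using hu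
  · simpa [Matrix.trace_fin_two_of] using ht
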